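/- The set of α ∈ (1, 3/2) for which there exists no n ≥ 1 with D^{n-1}(1/α) ∈ (1/(2α), 1 − 1/(2α)) has Lebesgue measure zero, where D is the doubling map. -/

import Mathlib

open MeasureTheory Set

/-- The doubling map `D(x) = 2x (mod 1)`. -/
noncomputable def D (x : ℝ) : ℝ := Int.fract (2*x)

lemma coe_D (x : ℝ) : ((D x : ℝ) : AddCircle (1:ℝ)) = (2:ℕ) • (x : AddCircle (1:ℝ)) := by
  have h1 : ((Int.fract (2*x) : ℝ) : AddCircle (1:ℝ)) = ((2*x : ℝ) : AddCircle (1:ℝ)) := by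
    rw [Int.fract, sub_eq_add_neg, QuotientAddGroup.mk_add]
    have : ((-(⌊2*x⌋ : ℝ) : ℝ) : AddCircle (1:ℝ)) = 0 := by
      rw [QuotientAddGroup.eq_zero_iff]
      exact ⟨-⌊2*x⌋, by simp⟩
    rw [this, add_zero]
  rw [D, h1, two_smul, two_mul, QuotientAddGroup.mk_add]

lemma D_mem_Ico (x : ℝ) : D x ∈ Ico (0:ℝ) 1 := ⟨Int.fract_nonneg _, Int.fract_lt_one _⟩

lemma coe_iter (n : ℕ) (x : ℝ) :
    ((D^[n] x : ℝ) : AddCircle (1:ℝ)) = (fun y : AddCircle (1:ℝ) => (2:ℕ) • y)^[n] (x : AddCircle (1:ℝ)) := by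
  induction n with
  | zero => simp
  | succ n ih =>
    rw [Function.iterate_succ_apply', Function.iterate_succ_apply', coe_D, ih]

lemma null_avoid {a b : ℝ} (ha : 0 < a) (hab : a < b) (hb : b < 1) :
    volume {x ∈ Ico (0:ℝ) 1 | ∀ n, D^[n] x ∉ Ioo a b} = 0 := by
  set T : AddCircle (1:ℝ) → AddCircle (1:ℝ) := fun y => (2:ℕ) • y with hT
  have hTerg : Ergodic T volume := AddCircle.ergodic_nsmul (by norm_num)
  set B : Set (AddCircle (1:ℝ)) := ((↑) : ℝ → AddCircle (1:ℝ)) '' Ioo a b with hB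
  have hBopen : IsOpen B := by
    apply QuotientAddGroup.isOpenMap_coe
    exact isOpen_Ioo
  have hBne : B.Nonempty := ⟨_, ⟨a + (b-a)/2, ⟨by linarith, by linarith⟩, rfl⟩⟩
  have hBpos : volume B ≠ 0 := (hBopen.measure_pos volume hBne).ne'
  have hTcont : Continuous T := by
    have : T = fun y => y + y := by funext y; rw [hT]; simp [two_smul]
    rw [this]; exact continuous_id.add continuous_id
  set U : Set (AddCircle (1:ℝ)) := ⋃ n, T^[n] ⁻¹' B with hU
  have hUmeas : MeasurableSet U :=
    MeasurableSet.iUnion fun n => (hTcont.iterate n).measurable hBopen.measurableSet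
  have hsub : T ⁻¹' U ⊆ U := by
    rintro y hy
    simp only [hU, mem_iUnion, mem_preimage] at hy ⊢
    obtain ⟨n, hn⟩ := hy
    exact ⟨n + 1, by rwa [Function.iterate_succ_apply]⟩
  have := hTerg.ae_empty_or_univ_of_preimage_ae_le hUmeas.nullMeasurableSet
    (HasSubset.Subset.eventuallyLE hsub)
  rcases this with h | h
  · exfalso
    apply hBpos
    have hBU : B ⊆ U := by
      intro y hy; simp only [hU, mem_iUnion, mem_preimage]; exact ⟨0, by simpa⟩
    have : volume U = 0 := by
      rw [show volume U = volume (∅ : Set (AddCircle (1:ℝ))) from measure_congr h]; simp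
    exact measure_mono_null hBU this
  · -- U conull
    have hUc : volume Uᶜ = 0 := by
      rw [← ae_eq_univ] at *; exact h
    have key : volume ((QuotientAddGroup.mk ⁻¹' Uᶜ : Set ℝ) ∩ Ioc 0 (0 + 1)) = 0 := by
      rw [← AddCircle.add_projection_respects_measure (T := (1:ℝ)) 0 hUmeas.compl]
      exact hUc
    have hss : {x ∈ Ico (0:ℝ) 1 | ∀ n, D^[n] x ∉ Ioo a b} ⊆
        (QuotientAddGroup.mk ⁻¹' Uᶜ : Set ℝ) ∩ Ioc 0 (0+1) ∪ {0} := by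
      rintro x ⟨hx, hnot⟩
      rcases eq_or_lt_of_le hx.1 with h0 | h0
      · right; simp [← h0]
      left
      refine ⟨?_, h0, by linarith [hx.2]⟩
      simp only [mem_preimage, mem_compl_iff, hU, mem_iUnion, mem_preimage]
      rintro ⟨n, hn⟩
      rw [← coe_iter] at hn
      obtain ⟨w, hw, hwx⟩ := hn
      have hDx : D^[n] x ∈ Ico (0:ℝ) 1 := by
        cases n with
        | zero => simpa using hx
        | succ m => rw [Function.iterate_succ_apply']; exact D_mem_Ico _
      have hwIco : w ∈ Ico (0:ℝ) (0 + 1) := ⟨by linarith [hw.1], by simpa using by linarith [hw.2]⟩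
      have : w = D^[n] x := by
        rw [← AddCircle.coe_eq_coe_iff_of_mem_Ico hwIco (by simpa using hDx)]
        exact hwx
      exact hnot n (this ▸ hw)
    exact measure_mono_null hss (measure_union_null key (by simp))

lemma inv_image_null {s : Set ℝ} (hs : volume s = 0) :
    volume ((fun x : ℝ => x⁻¹) '' (s ∩ Ioo (1/2) 1)) = 0 := by
  have lip : LipschitzOnWith 4 (fun x : ℝ => x⁻¹) (Ioo (1/2:ℝ) 1) := by
    apply LipschitzOnWith.of_dist_le_mul
    intro x hx y hy
    rw [Real.dist_eq, Real.dist_eq]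
    have hx1 := hx.1; have hx2 := hx.2; have hy1 := hy.1; have hy2 := hy.2
    have hx0 : (0:ℝ) < x := by linarith
    have hy0 : (0:ℝ) < y := by linarith
    have heq : x⁻¹ - y⁻¹ = (y - x)/(x*y) := by field_simp
    rw [heq, abs_div, abs_of_pos (by positivity : (0:ℝ) < x*y), abs_sub_comm y x,
      div_le_iff₀ (by positivity)]
    have h4 : (1:ℝ) ≤ 4*(x*y) := by nlinarith
    push_cast
    nlinarith [abs_nonneg (x-y)]
  have h1 := (lip.mono inter_subset_right).hausdorffMeasure_image_le
    (zero_le_one (α := ℝ)) (s := s ∩ Ioo (1/2) 1)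
  have h2 : μH[(1:ℝ)] (s ∩ Ioo (1/2) 1) = 0 := by
    rw [MeasureTheory.hausdorffMeasure_real]
    exact measure_mono_null inter_subset_left hs
  rw [← MeasureTheory.hausdorffMeasure_real]
  rw [h2, mul_zero] at h1
  exact le_antisymm h1 zero_le

theorem stmt10 :
    MeasureTheory.volume {α ∈ Set.Ioo (1:ℝ) (3/2) |
      ¬ ∃ n : ℕ, 1 ≤ n ∧ D^[n-1] (1/α) ∈ Set.Ioo (1/(2*α)) (1 - 1/(2*α))} = 0 := by
  have hsub : {α ∈ Set.Ioo (1:ℝ) (3/2) |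
      ¬ ∃ n : ℕ, 1 ≤ n ∧ D^[n-1] (1/α) ∈ Set.Ioo (1/(2*α)) (1 - 1/(2*α))} ⊆
      ⋃ q : ℚ, ⋃ _ : 0 < (q:ℝ) ∧ (q:ℝ) < 1/2,
        (fun x : ℝ => x⁻¹) '' ({x ∈ Ico (0:ℝ) 1 | ∀ n, D^[n] x ∉ Ioo ((q:ℝ)) (1 - (q:ℝ))}
          ∩ Ioo (1/2) 1) := by
    rintro α ⟨⟨hα1, hα2⟩, hnot⟩
    have hα0 : (0:ℝ) < α := by linarith
    have hlt : 1/(2*α) < 1/2 := by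
      rw [div_lt_div_iff₀ (by linarith) (by norm_num)]; linarith
    have hgt : (0:ℝ) < 1/(2*α) := by positivity
    obtain ⟨q, hq1, hq2⟩ := exists_rat_btwn hlt
    simp only [mem_iUnion]
    refine ⟨q, ⟨lt_trans hgt hq1, hq2⟩, 1/α, ⟨⟨⟨by positivity, ?_⟩, ?_⟩, ?_, ?_⟩, by
      field_simp⟩
    · rw [div_lt_one hα0]; exact hα1
    · intro n hn
      apply hnot
      refine ⟨n + 1, by omega, ?_⟩
      simp only [Nat.add_sub_cancel]
      exact ⟨by linarith [hn.1], by linarith [hn.2]⟩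
    · rw [lt_div_iff₀ hα0]; linarith
    · rw [div_lt_one hα0]; exact hα1
  apply measure_mono_null hsub
  apply measure_iUnion_null
  intro q
  apply measure_iUnion_null
  rintro ⟨hq0, hq12⟩
  exact inv_image_null (null_avoid hq0 (by linarith) (by linarith))
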